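/- arXiv:1906.00752 — 6 statements merged into one kernel-verified Lean document; each statement's English description precedes it below -/
import Mathlib

section
/- If x_1,...,x_n are i.i.d. uniform on {0,...,\ell-1}, then the variance of the Kendall score S equals ((\ell-1)/\ell) * n(n-1)/2 + ((\ell^2-1)/\ell^2) * n(n-1)(n-2)/9. -/
open Finset

/-- Kendall score S = S⁺ - S⁻ of a finite sequence: S⁺ counts the pairs of positions in which
the earlier element exceeds the later one, S⁻ those in which the earlier element is smaller
(the paper's convention: S(0 1 1 2 0 2 1) = 5 - 11 = -6). -/
def kendallS {n : ℕ} {α : Type*} [LinearOrder α] (x : Fin n → α) : ℤ :=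
  ((Finset.univ.filter (fun p : Fin n × Fin n => p.2 < p.1 ∧ x p.1 < x p.2)).card : ℤ) -
  ((Finset.univ.filter (fun p : Fin n × Fin n => p.2 < p.1 ∧ x p.2 < x p.1)).card : ℤ)
namespace KendallAux

/-- sign of comparison as a rational number -/
def sgn {ℓ : ℕ} (a b : Fin ℓ) : ℚ := (if a < b then 1 else 0) - (if b < a then 1 else 0)

/-- Kendall score as a rational sum over all ordered pairs -/
def SQ {n ℓ : ℕ} (x : Fin n → Fin ℓ) : ℚ :=
  ∑ p : Fin n × Fin n, if p.2 < p.1 then sgn (x p.1) (x p.2) else 0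

lemma sgn_antisymm {ℓ : ℕ} (a b : Fin ℓ) : sgn b a = - sgn a b := by
  rcases lt_trichotomy a b with h | h | h
  · simp [sgn, h, asymm h]
  · subst h; simp [sgn, lt_irrefl]
  · simp [sgn, h, asymm h]

lemma sgn_sq {ℓ : ℕ} (a b : Fin ℓ) : sgn a b ^ 2 = if a = b then 0 else 1 := by
  rcases lt_trichotomy a b with h | h | h
  · simp [sgn, h, asymm h, h.ne]
  · subst h; simp [sgn, lt_irrefl]
  · simp [sgn, h, asymm h, h.ne']

/-- key splitting lemma -/
lemma sum_comp_inj {n k ℓ : ℕ} (e : Fin k → Fin n) (he : Function.Injective e)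
    (F : (Fin k → Fin ℓ) → ℚ) :
    ∑ x : Fin n → Fin ℓ, F (x ∘ e) = (ℓ : ℚ) ^ (n - k) * ∑ y : Fin k → Fin ℓ, F y := by
  classical
  set S : Set (Fin n) := Set.range e with hS
  let E : (Fin n → Fin ℓ) ≃ ((S → Fin ℓ) × ((↥(Sᶜ)) → Fin ℓ)) :=
    (Equiv.arrowCongr (Equiv.Set.sumCompl S).symm (Equiv.refl _)).trans
      (Equiv.sumArrowEquivProdArrow _ _ _)
  have h1 : ∑ x : Fin n → Fin ℓ, F (x ∘ e)
      = ∑ uv : (S → Fin ℓ) × ((↥(Sᶜ)) → Fin ℓ), F (uv.1 ∘ (Equiv.ofInjective e he)) := by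
    apply Fintype.sum_equiv E
    intro x
    have : x ∘ e = (E x).1 ∘ (Equiv.ofInjective e he) := by
      funext t
      simp [E, Equiv.sumArrowEquivProdArrow, Equiv.arrowCongr]
    rw [this]
  rw [h1, Fintype.sum_prod_type]
  have h3 : ∑ u : S → Fin ℓ, F (u ∘ Equiv.ofInjective e he) = ∑ y : Fin k → Fin ℓ, F y := by
    apply Fintype.sum_equiv (Equiv.arrowCongr (Equiv.ofInjective e he).symm (Equiv.refl _))
    intro u
    congr 1
  have hcard : (Fintype.card ((↥(Sᶜ)) → Fin ℓ) : ℚ) = (ℓ : ℚ) ^ (n - k) := by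
    rw [Fintype.card_fun, Fintype.card_fin, Fintype.card_compl_set,
      Set.card_range_of_injective he, Fintype.card_fin, Fintype.card_fin]
    push_cast
    ring
  simp only [Finset.sum_const, Finset.card_univ, nsmul_eq_mul]
  rw [← Finset.mul_sum, h3, hcard]

lemma sum_fin2 {α : Type*} [Fintype α] (G : α → α → ℚ) :
    ∑ y : Fin 2 → α, G (y 0) (y 1) = ∑ a : α, ∑ b : α, G a b := by
  rw [← Equiv.sum_comp (finTwoArrowEquiv α).symm (fun y => G (y 0) (y 1)),
    Fintype.sum_prod_type]
  simp [finTwoArrowEquiv]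

def fin3Equiv (α : Type*) : (Fin 3 → α) ≃ α × α × α where
  toFun y := (y 0, y 1, y 2)
  invFun p := ![p.1, p.2.1, p.2.2]
  left_inv y := by
    funext i
    fin_cases i <;> rfl
  right_inv p := rfl

lemma sum_fin3 {α : Type*} [Fintype α] (G : α → α → α → ℚ) :
    ∑ y : Fin 3 → α, G (y 0) (y 1) (y 2) = ∑ a : α, ∑ b : α, ∑ c : α, G a b c := by
  rw [← Equiv.sum_comp (fin3Equiv α).symm (fun y => G (y 0) (y 1) (y 2)),
    Fintype.sum_prod_type]
  refine Finset.sum_congr rfl fun a _ => ?_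
  rw [Fintype.sum_prod_type]
  rfl

lemma sum_fin1 {α : Type*} [Fintype α] (G : α → ℚ) :
    ∑ y : Fin 1 → α, G (y 0) = ∑ b : α, G b := by
  rw [← Equiv.sum_comp (Equiv.funUnique (Fin 1) α).symm (fun y => G (y 0))]
  rfl

lemma sum_eval1 {n ℓ : ℕ} (hℓ : 0 < ℓ) (j : Fin n) (G : Fin ℓ → ℚ) :
    ∑ x : Fin n → Fin ℓ, G (x j) = (ℓ : ℚ) ^ n / (ℓ : ℚ) * ∑ b : Fin ℓ, G b := by
  have he : Function.Injective (fun _ : Fin 1 => j) := fun a b _ => Subsingleton.elim a b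
  have h := sum_comp_inj (e := fun _ : Fin 1 => j) he (fun y => G (y 0))
  simp only [Function.comp] at h
  rw [h, sum_fin1, pow_sub₀ (ℓ : ℚ) (by positivity) j.pos, pow_one]
  ring

lemma sum_eval2 {n ℓ : ℕ} (hℓ : 0 < ℓ) {i j : Fin n} (hij : i ≠ j)
    (G : Fin ℓ → Fin ℓ → ℚ) :
    ∑ x : Fin n → Fin ℓ, G (x i) (x j)
      = (ℓ : ℚ) ^ n / (ℓ : ℚ) ^ 2 * ∑ a : Fin ℓ, ∑ b : Fin ℓ, G a b := by
  have he : Function.Injective ![i, j] := by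
    intro a b hab
    fin_cases a <;> fin_cases b <;> simp_all
  have hn : 2 ≤ n := by
    simpa using Fintype.card_le_of_injective _ he
  have h := sum_comp_inj (e := ![i, j]) he (fun y => G (y 0) (y 1))
  simp only [Function.comp, Matrix.cons_val_zero, Matrix.cons_val_one, Matrix.head_cons] at h
  rw [h, sum_fin2, pow_sub₀ (ℓ : ℚ) (by positivity) hn]
  ring

lemma sum_eval3 {n ℓ : ℕ} (hℓ : 0 < ℓ) {i j k : Fin n} (hij : i ≠ j) (hik : i ≠ k)
    (hjk : j ≠ k) (G : Fin ℓ → Fin ℓ → Fin ℓ → ℚ) :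
    ∑ x : Fin n → Fin ℓ, G (x i) (x j) (x k)
      = (ℓ : ℚ) ^ n / (ℓ : ℚ) ^ 3 * ∑ a : Fin ℓ, ∑ b : Fin ℓ, ∑ c : Fin ℓ, G a b c := by
  have he : Function.Injective ![i, j, k] := by
    intro a b hab
    fin_cases a <;> fin_cases b <;> simp_all
  have hn : 3 ≤ n := by
    simpa using Fintype.card_le_of_injective _ he
  have h := sum_comp_inj (e := ![i, j, k]) he (fun y => G (y 0) (y 1) (y 2))
  simp only [Function.comp, Matrix.cons_val_zero, Matrix.cons_val_one, Matrix.head_cons] at h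
  rw [show (![i,j,k] 2) = k from rfl] at h
  rw [h, sum_fin3, pow_sub₀ (ℓ : ℚ) (by positivity) hn]
  ring

lemma sum_range_q (m : ℕ) : ∑ i ∈ Finset.range m, (i : ℚ) = m * (m - 1) / 2 := by
  induction m with
  | zero => simp
  | succ m ih => rw [Finset.sum_range_succ, ih]; push_cast; ring

lemma sum_range_sq_q (m : ℕ) :
    ∑ i ∈ Finset.range m, (i : ℚ) ^ 2 = m * (m - 1) * (2 * m - 1) / 6 := by
  induction m with
  | zero => simp
  | succ m ih => rw [Finset.sum_range_succ, ih]; push_cast; ring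

/-- row sum of sgn -/
def g {ℓ : ℕ} (a : Fin ℓ) : ℚ := ∑ b : Fin ℓ, sgn a b

lemma g_eq {ℓ : ℕ} (a : Fin ℓ) : g a = (ℓ : ℚ) - 1 - 2 * a := by
  unfold g sgn
  rw [Finset.sum_sub_distrib, Finset.sum_boole, Finset.sum_boole,
    Finset.filter_lt_eq_Ioi, Finset.filter_gt_eq_Iio, Fin.card_Ioi, Fin.card_Iio]
  have h1 : (a : ℕ) + 1 ≤ ℓ := a.2
  have : ℓ - 1 - (a : ℕ) = ℓ - (1 + (a : ℕ)) := by omega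
  rw [this, Nat.cast_sub (by omega)]
  push_cast
  ring

lemma sum_sgn_fst {ℓ : ℕ} (b : Fin ℓ) : ∑ a : Fin ℓ, sgn a b = - g b := by
  unfold g
  rw [← Finset.sum_neg_distrib]
  exact Finset.sum_congr rfl fun a _ => sgn_antisymm b a

lemma sum_g {ℓ : ℕ} : ∑ a : Fin ℓ, g a = 0 := by
  have : ∀ a : Fin ℓ, g a = (fun i : ℕ => (ℓ : ℚ) - 1 - 2 * i) (a : ℕ) := by
    intro a; rw [g_eq]
  rw [Finset.sum_congr rfl fun a _ => this a]
  beta_reduce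
  rw [Fin.sum_univ_eq_sum_range (fun i : ℕ => (ℓ : ℚ) - 1 - 2 * i) ℓ]
  rw [Finset.sum_sub_distrib, Finset.sum_const, ← Finset.mul_sum, sum_range_q,
    Finset.card_range, nsmul_eq_mul]
  ring

lemma sum_g_sq {ℓ : ℕ} : ∑ a : Fin ℓ, g a ^ 2 = (ℓ : ℚ) * ((ℓ : ℚ) ^ 2 - 1) / 3 := by
  have : ∀ a : Fin ℓ, g a ^ 2 = (fun i : ℕ =>
      ((ℓ : ℚ) - 1) ^ 2 - 4 * ((ℓ : ℚ) - 1) * i + 4 * (i : ℚ) ^ 2) (a : ℕ) := by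
    intro a; rw [g_eq]; ring
  rw [Finset.sum_congr rfl fun a _ => this a]
  beta_reduce
  rw [Fin.sum_univ_eq_sum_range
    (fun i : ℕ => ((ℓ : ℚ) - 1) ^ 2 - 4 * ((ℓ : ℚ) - 1) * i + 4 * (i : ℚ) ^ 2) ℓ]
  rw [Finset.sum_add_distrib, Finset.sum_sub_distrib, Finset.sum_const, ← Finset.mul_sum,
    ← Finset.mul_sum, sum_range_q, sum_range_sq_q, Finset.card_range, nsmul_eq_mul]
  ring

lemma sum_sgn_sq {ℓ : ℕ} : ∑ a : Fin ℓ, ∑ b : Fin ℓ, sgn a b ^ 2 = (ℓ : ℚ) * ((ℓ : ℚ) - 1) := by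
  have inner : ∀ a : Fin ℓ, ∑ b : Fin ℓ, sgn a b ^ 2 = (ℓ : ℚ) - 1 := by
    intro a
    have : ∀ b : Fin ℓ, sgn a b ^ 2 = 1 - (if a = b then (1 : ℚ) else 0) := by
      intro b; rw [sgn_sq]; by_cases h : a = b <;> simp [h]
    rw [Finset.sum_congr rfl fun b _ => this b, Finset.sum_sub_distrib, Finset.sum_const,
      Finset.sum_ite_eq, Finset.card_univ, Fintype.card_fin, nsmul_eq_mul]
    simp
  rw [Finset.sum_congr rfl fun a _ => inner a, Finset.sum_const, Finset.card_univ,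
    Fintype.card_fin, nsmul_eq_mul]

def myConsEquiv (n : ℕ) (α : Type*) : α × (Fin n → α) ≃ (Fin (n + 1) → α) where
  toFun p := Fin.cons p.1 p.2
  invFun x := (x 0, fun i => x i.succ)
  left_inv p := by
    refine Prod.ext ?_ ?_
    · exact Fin.cons_zero (α := fun _ => α) p.1 p.2
    · funext i
      exact Fin.cons_succ (α := fun _ => α) p.1 p.2 i
  right_inv x := Fin.cons_self_tail x

lemma sum_pi_cons {n ℓ : ℕ} (f : (Fin (n + 1) → Fin ℓ) → ℚ) :
    ∑ x : Fin (n + 1) → Fin ℓ, f x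
      = ∑ a : Fin ℓ, ∑ x' : Fin n → Fin ℓ, f (Fin.cons a x') := by
  rw [← Equiv.sum_comp (myConsEquiv n (Fin ℓ)) f, Fintype.sum_prod_type]
  rfl

lemma SQ_split {n ℓ : ℕ} (x : Fin (n + 1) → Fin ℓ) :
    SQ x = SQ (fun j => x j.succ) + ∑ i : Fin n, sgn (x i.succ) (x 0) := by
  unfold SQ
  rw [Fintype.sum_prod_type, Fin.sum_univ_succ]
  have h0 : ∑ j : Fin (n + 1), (if j < 0 then sgn (x 0) (x j) else 0) = 0 := by
    apply Finset.sum_eq_zero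
    intro j _
    simp [Fin.not_lt_zero]
  rw [h0, zero_add]
  have h1 : ∀ i : Fin n, ∑ j : Fin (n + 1),
      (if j < Fin.succ i then sgn (x (Fin.succ i)) (x j) else 0)
      = sgn (x i.succ) (x 0) + ∑ j : Fin n, (if j < i then sgn (x i.succ) (x j.succ) else 0) := by
    intro i
    rw [Fin.sum_univ_succ]
    congr 1
    · simp [Fin.succ_pos]
  rw [Finset.sum_congr rfl fun i _ => h1 i, Finset.sum_add_distrib, Fintype.sum_prod_type]
  ring

lemma SQ_cons {n ℓ : ℕ} (a : Fin ℓ) (x' : Fin n → Fin ℓ) :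
    SQ (Fin.cons a x') = SQ x' + ∑ i : Fin n, sgn (x' i) a := by
  rw [SQ_split (Fin.cons a x')]
  have h1 : (fun j : Fin n => (Fin.cons a x' : Fin (n + 1) → Fin ℓ) j.succ) = x' := by
    funext j
    exact Fin.cons_succ (α := fun _ => Fin ℓ) a x' j
  have h2 : (Fin.cons a x' : Fin (n + 1) → Fin ℓ) 0 = a :=
    Fin.cons_zero (α := fun _ => Fin ℓ) a x'
  rw [h1, h2]
  have h3 : ∀ i : Fin n, sgn ((Fin.cons a x' : Fin (n + 1) → Fin ℓ) i.succ) a = sgn (x' i) a :=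
    fun i => by rw [Fin.cons_succ (α := fun _ => Fin ℓ) a x' i]
  rw [Finset.sum_congr rfl fun i _ => h3 i]

lemma sum_SQ {n ℓ : ℕ} (hℓ : 0 < ℓ) : ∑ x : Fin n → Fin ℓ, SQ x = 0 := by
  unfold SQ
  rw [Finset.sum_comm]
  refine Finset.sum_eq_zero fun p _ => ?_
  by_cases hp : p.2 < p.1
  · simp only [if_pos hp]
    rw [sum_eval2 hℓ hp.ne' sgn]
    have : ∑ a : Fin ℓ, ∑ b : Fin ℓ, sgn a b = 0 := sum_g
    rw [this, mul_zero]
  · simp [hp]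

/-- column-product kernel -/
def Kf {ℓ : ℕ} (b c : Fin ℓ) : ℚ := ∑ a : Fin ℓ, sgn b a * sgn c a

lemma sum_Kf_diag {ℓ : ℕ} : ∑ b : Fin ℓ, Kf b b = (ℓ : ℚ) * ((ℓ : ℚ) - 1) := by
  have : ∀ b : Fin ℓ, Kf b b = ∑ a : Fin ℓ, sgn b a ^ 2 := by
    intro b
    unfold Kf
    exact Finset.sum_congr rfl fun a _ => (pow_two _).symm
  rw [Finset.sum_congr rfl fun b _ => this b]
  exact sum_sgn_sq

lemma sum_Kf {ℓ : ℕ} : ∑ b : Fin ℓ, ∑ c : Fin ℓ, Kf b c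
    = (ℓ : ℚ) * ((ℓ : ℚ) ^ 2 - 1) / 3 := by
  unfold Kf
  rw [Finset.sum_congr rfl fun b (_ : b ∈ univ) => Finset.sum_comm, Finset.sum_comm]
  have : ∀ a : Fin ℓ, ∑ b : Fin ℓ, ∑ c : Fin ℓ, sgn b a * sgn c a = g a ^ 2 := by
    intro a
    rw [← Finset.sum_mul_sum, sum_sgn_fst]
    ring
  rw [Finset.sum_congr rfl fun a _ => this a, sum_g_sq]

lemma cross_term {n ℓ : ℕ} (hℓ : 0 < ℓ) (i : Fin n) (p : Fin n × Fin n) (hp : p.2 < p.1) :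
    ∑ x' : Fin n → Fin ℓ, sgn (x' p.1) (x' p.2) * g (x' i)
      = (ℓ : ℚ) ^ n / (ℓ : ℚ) ^ 2 * (∑ c : Fin ℓ, g c ^ 2)
        * ((if i = p.1 then (1 : ℚ) else 0) - (if i = p.2 then (1 : ℚ) else 0)) := by
  by_cases h1 : i = p.1
  · rw [h1]
    rw [sum_eval2 hℓ hp.ne' (fun a b => sgn a b * g a)]
    have e : ∀ a : Fin ℓ, ∑ b : Fin ℓ, sgn a b * g a = g a ^ 2 := by
      intro a
      rw [← Finset.sum_mul]
      rw [show (∑ b : Fin ℓ, sgn a b) = g a from rfl]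
      ring
    rw [Finset.sum_congr rfl fun a _ => e a, if_pos rfl, if_neg hp.ne']
    ring
  · by_cases h2 : i = p.2
    · rw [h2]
      rw [sum_eval2 hℓ hp.ne' (fun a b => sgn a b * g b)]
      have e : ∑ a : Fin ℓ, ∑ b : Fin ℓ, sgn a b * g b = -∑ c : Fin ℓ, g c ^ 2 := by
        rw [Finset.sum_comm]
        have e2 : ∀ b : Fin ℓ, ∑ a : Fin ℓ, sgn a b * g b = -(g b ^ 2) := by
          intro b
          rw [← Finset.sum_mul, sum_sgn_fst]
          ring
        rw [Finset.sum_congr rfl fun b _ => e2 b, Finset.sum_neg_distrib]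
      rw [e, if_neg hp.ne, if_pos rfl]
      ring
    · rw [sum_eval3 hℓ hp.ne' (fun h => h1 h.symm) (fun h => h2 h.symm)
        (fun a b c => sgn a b * g c)]
      have e : ∀ a b : Fin ℓ, ∑ c : Fin ℓ, sgn a b * g c = 0 := by
        intro a b
        rw [← Finset.mul_sum, sum_g, mul_zero]
      have e2 : ∀ a : Fin ℓ, ∑ b : Fin ℓ, ∑ c : Fin ℓ, sgn a b * g c = 0 := by
        intro a
        rw [Finset.sum_congr rfl fun b _ => e a b, Finset.sum_const, smul_zero]
      rw [Finset.sum_congr rfl fun a _ => e2 a, Finset.sum_const, smul_zero,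
        if_neg h1, if_neg h2]
      ring

lemma hB_zero {n ℓ : ℕ} (hℓ : 0 < ℓ) :
    ∑ i : Fin n, ∑ x' : Fin n → Fin ℓ, SQ x' * g (x' i) = 0 := by
  have expand : ∀ i : Fin n, ∑ x' : Fin n → Fin ℓ, SQ x' * g (x' i)
      = ∑ p : Fin n × Fin n, ∑ x' : Fin n → Fin ℓ,
          (if p.2 < p.1 then sgn (x' p.1) (x' p.2) * g (x' i) else 0) := by
    intro i
    have e : ∀ x' : Fin n → Fin ℓ, SQ x' * g (x' i)
        = ∑ p : Fin n × Fin n,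
            (if p.2 < p.1 then sgn (x' p.1) (x' p.2) * g (x' i) else 0) := by
      intro x'
      unfold SQ
      rw [Finset.sum_mul]
      refine Finset.sum_congr rfl fun p _ => ?_
      split_ifs <;> simp
    rw [Finset.sum_congr rfl fun x' _ => e x', Finset.sum_comm]
  rw [Finset.sum_congr rfl fun i _ => expand i, Finset.sum_comm]
  refine Finset.sum_eq_zero fun p _ => ?_
  by_cases hp : p.2 < p.1
  · have e : ∀ i : Fin n, ∑ x' : Fin n → Fin ℓ,
        (if p.2 < p.1 then sgn (x' p.1) (x' p.2) * g (x' i) else 0)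
        = (ℓ : ℚ) ^ n / (ℓ : ℚ) ^ 2 * (∑ c : Fin ℓ, g c ^ 2)
          * ((if i = p.1 then (1 : ℚ) else 0) - (if i = p.2 then (1 : ℚ) else 0)) := by
      intro i
      simp only [if_pos hp]
      exact cross_term hℓ i p hp
    rw [Finset.sum_congr rfl fun i _ => e i, ← Finset.mul_sum, Finset.sum_sub_distrib]
    have hone : ∀ c : Fin n, ∑ i : Fin n, (if i = c then (1 : ℚ) else 0) = 1 := by
      intro c
      rw [Finset.sum_ite_eq' Finset.univ c (fun _ => (1 : ℚ))]
      simp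
    rw [hone p.1, hone p.2, sub_self, mul_zero]
  · simp [hp]

lemma hC_eval {n ℓ : ℕ} (hℓ : 0 < ℓ) :
    ∑ a : Fin ℓ, ∑ x' : Fin n → Fin ℓ, (∑ i : Fin n, sgn (x' i) a) ^ 2
      = (n : ℚ) * ((n : ℚ) * ((ℓ : ℚ) ^ n / (ℓ : ℚ) ^ 2 * ((ℓ : ℚ) * ((ℓ : ℚ) ^ 2 - 1) / 3))
          + ((ℓ : ℚ) ^ n / (ℓ : ℚ) * ((ℓ : ℚ) * ((ℓ : ℚ) - 1))
            - (ℓ : ℚ) ^ n / (ℓ : ℚ) ^ 2 * ((ℓ : ℚ) * ((ℓ : ℚ) ^ 2 - 1) / 3))) := by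
  set D : ℚ := (ℓ : ℚ) ^ n / (ℓ : ℚ) * ((ℓ : ℚ) * ((ℓ : ℚ) - 1)) with hD
  set E : ℚ := (ℓ : ℚ) ^ n / (ℓ : ℚ) ^ 2 * ((ℓ : ℚ) * ((ℓ : ℚ) ^ 2 - 1) / 3) with hE
  rw [Finset.sum_comm]
  have inner : ∀ x' : Fin n → Fin ℓ, ∑ a : Fin ℓ, (∑ i : Fin n, sgn (x' i) a) ^ 2
      = ∑ i : Fin n, ∑ j : Fin n, Kf (x' i) (x' j) := by
    intro x'
    have e1 : ∀ a : Fin ℓ, (∑ i : Fin n, sgn (x' i) a) ^ 2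
        = ∑ i : Fin n, ∑ j : Fin n, sgn (x' i) a * sgn (x' j) a := by
      intro a
      rw [pow_two, Finset.sum_mul_sum]
    rw [Finset.sum_congr rfl fun a _ => e1 a, Finset.sum_comm]
    refine Finset.sum_congr rfl fun i _ => ?_
    rw [Finset.sum_comm]
    rfl
  rw [Finset.sum_congr rfl fun x' _ => inner x', Finset.sum_comm]
  have swap2 : ∀ i : Fin n, ∑ x' : Fin n → Fin ℓ, ∑ j : Fin n, Kf (x' i) (x' j)
      = ∑ j : Fin n, ∑ x' : Fin n → Fin ℓ, Kf (x' i) (x' j) := fun i => Finset.sum_comm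
  rw [Finset.sum_congr rfl fun i _ => swap2 i]
  have perq : ∀ i j : Fin n, ∑ x' : Fin n → Fin ℓ, Kf (x' i) (x' j)
      = if i = j then D else E := by
    intro i j
    by_cases h : i = j
    · rw [if_pos h, h]
      rw [sum_eval1 hℓ j (fun b => Kf b b), sum_Kf_diag]
    · rw [if_neg h]
      rw [sum_eval2 hℓ h Kf, sum_Kf]
  rw [Finset.sum_congr rfl fun i _ => Finset.sum_congr rfl fun j _ => perq i j]
  have rowsum : ∀ i : Fin n, ∑ j : Fin n, (if i = j then D else E)
      = (n : ℚ) * E + (D - E) := by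
    intro i
    have pt : ∀ j : Fin n, (if i = j then D else E) = E + (if i = j then D - E else 0) := by
      intro j
      by_cases h : i = j <;> simp [h]
    rw [Finset.sum_congr rfl fun j _ => pt j, Finset.sum_add_distrib, Finset.sum_const,
      Finset.sum_ite_eq, Finset.card_univ, Fintype.card_fin, nsmul_eq_mul]
    simp
  rw [Finset.sum_congr rfl fun i _ => rowsum i, Finset.sum_const, Finset.card_univ,
    Fintype.card_fin, nsmul_eq_mul]

lemma sum_SQ_sq {ℓ : ℕ} (hℓ : 0 < ℓ) (n : ℕ) :
    ∑ x : Fin n → Fin ℓ, SQ x ^ 2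
      = (ℓ : ℚ) ^ n * (((ℓ : ℚ) - 1) / ℓ * ((n : ℚ) * ((n : ℚ) - 1) / 2)
        + ((ℓ : ℚ) ^ 2 - 1) / (ℓ : ℚ) ^ 2 * ((n : ℚ) * ((n : ℚ) - 1) * ((n : ℚ) - 2) / 9)) := by
  have hℓq : (ℓ : ℚ) ≠ 0 := by positivity
  induction n with
  | zero =>
      have h0 : ∀ x : Fin 0 → Fin ℓ, SQ x ^ 2 = 0 := by
        intro x
        have hx : SQ x = 0 := by
          unfold SQ
          apply Finset.sum_eq_zero
          intro p _
          exact p.1.elim0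
        rw [hx]
        ring
      rw [Finset.sum_congr rfl fun x _ => h0 x, Finset.sum_const, smul_zero]
      norm_num
  | succ n IH =>
      rw [sum_pi_cons (fun x => SQ x ^ 2)]
      have hsplit : ∀ (a : Fin ℓ) (x' : Fin n → Fin ℓ),
          SQ (Fin.cons a x') ^ 2
            = SQ x' ^ 2 + (2 * (SQ x' * ∑ i : Fin n, sgn (x' i) a)
              + (∑ i : Fin n, sgn (x' i) a) ^ 2) := by
        intro a x'
        rw [SQ_cons]
        ring
      rw [Finset.sum_congr rfl fun a _ =>
        Finset.sum_congr rfl fun x' _ => hsplit a x']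
      simp only [Finset.sum_add_distrib]
      have hA : ∑ a : Fin ℓ, ∑ x' : Fin n → Fin ℓ, SQ x' ^ 2
          = (ℓ : ℚ) * ∑ x' : Fin n → Fin ℓ, SQ x' ^ 2 := by
        rw [Finset.sum_const, Finset.card_univ, Fintype.card_fin, nsmul_eq_mul]
      have hBform : ∑ a : Fin ℓ, ∑ x' : Fin n → Fin ℓ,
          2 * (SQ x' * ∑ i : Fin n, sgn (x' i) a) = 0 := by
        have e1 : ∀ x' : Fin n → Fin ℓ, ∑ a : Fin ℓ,
            2 * (SQ x' * ∑ i : Fin n, sgn (x' i) a)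
            = 2 * ∑ i : Fin n, SQ x' * g (x' i) := by
          intro x'
          rw [← Finset.mul_sum, ← Finset.mul_sum, Finset.sum_comm, Finset.mul_sum]
          rfl
        rw [Finset.sum_comm, Finset.sum_congr rfl fun x' _ => e1 x', ← Finset.mul_sum,
          Finset.sum_comm, hB_zero hℓ, mul_zero]
      rw [hA, hBform, hC_eval hℓ, IH]
      push_cast
      field_simp
      ring

end KendallAux

namespace KendallAux

lemma kendallS_eq_SQ {n ℓ : ℕ} (x : Fin n → Fin ℓ) : ((kendallS x : ℤ) : ℚ) = SQ x := by
  unfold kendallS SQ sgn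
  rw [Finset.card_filter, Finset.card_filter]
  push_cast
  rw [← Finset.sum_sub_distrib]
  refine Finset.sum_congr rfl fun p _ => ?_
  by_cases h1 : p.2 < p.1 <;> by_cases h2 : x p.1 < x p.2 <;> by_cases h3 : x p.2 < x p.1 <;>
    simp [h1, h2, h3]

end KendallAux

/-- Variance of S for i.i.d. uniform digits on {0,…,ℓ-1}. -/
theorem kendall_variance (n ℓ : ℕ) (hℓ : 0 < ℓ) :
    (∑ x : Fin n → Fin ℓ, (kendallS x : ℚ) ^ 2) / (ℓ : ℚ) ^ n
      - ((∑ x : Fin n → Fin ℓ, (kendallS x : ℚ)) / (ℓ : ℚ) ^ n) ^ 2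
    = ((ℓ : ℚ) - 1) / ℓ * ((n : ℚ) * ((n : ℚ) - 1) / 2)
      + ((ℓ : ℚ) ^ 2 - 1) / (ℓ : ℚ) ^ 2 * ((n : ℚ) * ((n : ℚ) - 1) * ((n : ℚ) - 2) / 9) := by
  have e1 : ∑ x : Fin n → Fin ℓ, (kendallS x : ℚ) ^ 2
      = ∑ x : Fin n → Fin ℓ, KendallAux.SQ x ^ 2 :=
    Finset.sum_congr rfl fun x _ => by rw [KendallAux.kendallS_eq_SQ x]
  have e2 : ∑ x : Fin n → Fin ℓ, (kendallS x : ℚ) = 0 := by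
    rw [Finset.sum_congr rfl fun x (_ : x ∈ Finset.univ) => KendallAux.kendallS_eq_SQ x]
    exact KendallAux.sum_SQ hℓ
  rw [e1, e2, KendallAux.sum_SQ_sq hℓ n, zero_div]
  have hpow : (ℓ : ℚ) ^ n ≠ 0 := by positivity
  field_simp
  ring
end

section
/- For the uniform binary case (\ell = 2) with n = 2\nu + 1 odd, the probability generating function of S (as a Laurent polynomial in x) equals 2^{-n+1} \prod_{k=1}^{\nu} (x^k + x^{-k})^2. -/
open Finset

lemma kendallS_eq_sum {n : ℕ} {α : Type*} [LinearOrder α] (x : Fin n → α) :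
    kendallS x = ∑ p : Fin n × Fin n,
      (((if p.2 < p.1 ∧ x p.1 < x p.2 then 1 else 0) : ℤ)
        - ((if p.2 < p.1 ∧ x p.2 < x p.1 then 1 else 0) : ℤ)) := by
  rw [Finset.sum_sub_distrib]
  simp [kendallS, Finset.sum_boole]

lemma kendallS_cons {n : ℕ} {α : Type*} [LinearOrder α] (y : α) (b : Fin n → α) :
    kendallS (Fin.cons y b) = kendallS b +
      ∑ i : Fin n, (((if b i < y then 1 else 0) : ℤ) - ((if y < b i then 1 else 0) : ℤ)) := by
  rw [kendallS_eq_sum, kendallS_eq_sum, Fintype.sum_prod_type, Fintype.sum_prod_type]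
  rw [Fin.sum_univ_succ]
  simp only [Fin.sum_univ_succ, Fin.cons_zero, Fin.cons_succ, Fin.not_lt_zero,
    Fin.succ_pos, Fin.succ_lt_succ_iff, false_and, if_false, true_and, lt_irrefl,
    sub_zero, zero_add, sub_self, and_false]
  rw [Finset.sum_add_distrib]
  simp only [Finset.sum_const_zero, zero_add]
  ring

lemma kendall_key (n : ℕ) (x : ℝ) (hx : x ≠ 0) : ∀ t : ℝ,
    ∑ b : Fin n → Fin 2, x ^ kendallS b * t ^ (∑ i, ((b i : ℕ)))
      = ∏ i ∈ Finset.range n, (1 + t * x ^ ((n : ℤ) - 1 - 2 * i)) := by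
  induction n with
  | zero =>
      intro t
      simp [kendallS]
  | succ n IH =>
      intro t
      rw [← Equiv.sum_comp (Fin.consEquiv (fun _ : Fin (n+1) => Fin 2))
          (fun b => x ^ kendallS b * t ^ (∑ i, ((b i : ℕ))))]
      rw [Fintype.sum_prod_type, Fin.sum_univ_two]
      have hcons : ∀ (y : Fin 2) (b : Fin n → Fin 2),
          (Fin.consEquiv (fun _ : Fin (n+1) => Fin 2)) (y, b) = Fin.cons y b := by
        intro y b; rfl
      have hc0 : ∀ v : Fin 2,
          (((if v < (0:Fin 2) then 1 else 0) - (if (0:Fin 2) < v then 1 else 0)) : ℤ)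
            = -((v : ℕ) : ℤ) := by decide
      have hc1 : ∀ v : Fin 2,
          (((if v < (1:Fin 2) then 1 else 0) - (if (1:Fin 2) < v then 1 else 0)) : ℤ)
            = 1 - ((v : ℕ) : ℤ) := by decide
      have hterm0 : ∀ b : Fin n → Fin 2,
          x ^ kendallS (Fin.cons (0:Fin 2) b) * t ^ (∑ i : Fin (n+1), (((Fin.cons (0:Fin 2) b : Fin (n+1) → Fin 2) i : ℕ)))
            = x ^ kendallS b * (t * x⁻¹) ^ (∑ i, ((b i : ℕ))) := by
        intro b
        rw [kendallS_cons]
        have h1 : ∑ i : Fin n, (((if b i < (0:Fin 2) then 1 else 0)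
            - (if (0:Fin 2) < b i then 1 else 0)) : ℤ) = -((∑ i, ((b i : ℕ)) : ℕ) : ℤ) := by
          rw [Finset.sum_congr rfl (fun i _ => hc0 (b i))]
          push_cast
          rw [Finset.sum_neg_distrib]
        have h2 : ∑ i : Fin (n+1), (((Fin.cons (0:Fin 2) b : Fin (n+1) → Fin 2) i : ℕ))
            = ∑ i, ((b i : ℕ)) := by
          rw [Fin.sum_univ_succ]; simp
        rw [h1, h2, zpow_add₀ hx, zpow_neg, zpow_natCast, mul_pow, inv_pow]
        ring
      have hterm1 : ∀ b : Fin n → Fin 2,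
          x ^ kendallS (Fin.cons (1:Fin 2) b) * t ^ (∑ i : Fin (n+1), (((Fin.cons (1:Fin 2) b : Fin (n+1) → Fin 2) i : ℕ)))
            = (t * x ^ (n : ℤ)) * (x ^ kendallS b * (t * x⁻¹) ^ (∑ i, ((b i : ℕ)))) := by
        intro b
        rw [kendallS_cons]
        have h1 : ∑ i : Fin n, (((if b i < (1:Fin 2) then 1 else 0)
            - (if (1:Fin 2) < b i then 1 else 0)) : ℤ)
            = (n : ℤ) - ((∑ i, ((b i : ℕ)) : ℕ) : ℤ) := by
          rw [Finset.sum_congr rfl (fun i _ => hc1 (b i)), Finset.sum_sub_distrib]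
          push_cast
          simp
        have h2 : ∑ i : Fin (n+1), (((Fin.cons (1:Fin 2) b : Fin (n+1) → Fin 2) i : ℕ))
            = 1 + ∑ i, ((b i : ℕ)) := by
          rw [Fin.sum_univ_succ]; simp
        rw [h1, h2, zpow_add₀ hx, zpow_sub₀ hx, zpow_natCast, zpow_natCast, mul_pow, inv_pow,
          pow_add, pow_one]
        field_simp
      simp only [hcons]
      rw [Finset.sum_congr rfl (fun b _ => hterm0 b),
          Finset.sum_congr rfl (fun b _ => hterm1 b),
          ← Finset.mul_sum, IH (t * x⁻¹)]
      rw [Finset.prod_range_succ']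
      have hfac : ∀ i ∈ Finset.range n, (1 + t * x⁻¹ * x ^ ((n : ℤ) - 1 - 2 * (i : ℤ)))
          = (1 + t * x ^ (((n + 1 : ℕ) : ℤ) - 1 - 2 * ((i + 1 : ℕ) : ℤ))) := by
        intro i _
        have h : (((n + 1 : ℕ) : ℤ) - 1 - 2 * ((i + 1 : ℕ) : ℤ))
            = ((n : ℤ) - 1 - 2 * (i : ℤ)) + (-1) := by push_cast; ring
        rw [h, zpow_add₀ hx, zpow_neg_one]
        ring
      rw [← Finset.prod_congr rfl hfac]
      have h0 : (((n + 1 : ℕ) : ℤ) - 1 - 2 * ((0 : ℕ) : ℤ)) = (n : ℤ) := by push_cast; ring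
      rw [h0]
      ring


lemma sq_fact (x : ℝ) (hx : x ≠ 0) (a : ℤ) :
    (1 + x ^ (2*a)) * (1 + x ^ (-(2*a))) = (x ^ a + x ^ (-a))^2 := by
  have h1 : x^(2*a) * x^(-(2*a)) = 1 := by rw [← zpow_add₀ hx]; simp
  have h2 : x^a * x^(-a) = 1 := by rw [← zpow_add₀ hx]; simp
  have h3 : x^a * x^a = x^(2*a) := by rw [← zpow_add₀ hx]; ring_nf
  have h4 : x^(-a) * x^(-a) = x^(-(2*a)) := by rw [← zpow_add₀ hx]; ring_nf
  have e1 : (x ^ a + x ^ (-a))^2 = x^(2*a) + 2*1 + x^(-(2*a)) := by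
    rw [← h2, ← h3, ← h4]; ring
  have e2 : (1 + x ^ (2*a)) * (1 + x ^ (-(2*a)))
      = 1 + x^(2*a) + x^(-(2*a)) + x^(2*a) * x^(-(2*a)) := by ring
  rw [e1, e2, h1]; ring

lemma prod_odd (ν : ℕ) (x : ℝ) (hx : x ≠ 0) :
    ∏ i ∈ Finset.range (2*ν+1), (1 + x ^ (2*(ν:ℤ) - 2*(i:ℤ)))
      = 2 * ∏ k ∈ Finset.Icc 1 ν, (x ^ (k:ℤ) + x ^ (-(k:ℤ)))^2 := by
  induction ν with
  | zero => norm_num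
  | succ ν IH =>
      have hn : 2*(ν+1)+1 = (2*ν+2)+1 := by ring
      rw [hn, Finset.prod_range_succ, Finset.prod_range_succ']
      have hfac : ∀ i ∈ Finset.range (2*ν+1),
          (1 + x ^ (2*((ν+1:ℕ):ℤ) - 2*((i+1:ℕ):ℤ))) = (1 + x ^ (2*(ν:ℤ) - 2*(i:ℤ))) := by
        intro i _
        congr 1
        push_cast
        ring
      rw [Finset.prod_congr rfl hfac, IH]
      rw [Finset.prod_Icc_succ_top (by omega : 1 ≤ ν + 1)]
      have h0 : (2*((ν+1:ℕ):ℤ) - 2*((0:ℕ):ℤ)) = 2*((ν:ℤ)+1) := by push_cast; ring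
      have h1 : (2*((ν+1:ℕ):ℤ) - 2*((2*ν+2:ℕ):ℤ)) = -(2*((ν:ℤ)+1)) := by push_cast; ring
      rw [h0, h1]
      have := sq_fact x hx ((ν:ℤ)+1)
      have hcast : (((ν+1:ℕ)):ℤ) = (ν:ℤ)+1 := by push_cast; ring
      rw [hcast]
      rw [← this]
      ring

/-- PGF of S for n = 2ν+1 fair coin flips: f(x) = 2^{-n+1} ∏ₖ (x^k + x^{-k})². -/
theorem kendall_pgf_odd (ν : ℕ) (x : ℝ) (hx : x ≠ 0) :
    ∑ j : Fin (2 * ν + 1) → Fin 2, (1 / 2 ^ (2 * ν + 1) : ℝ) * x ^ kendallS j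
      = 2 ^ (-(2 * ν + 1 : ℤ) + 1)
        * ∏ k ∈ Finset.Icc 1 ν, (x ^ (k : ℤ) + x ^ (-(k : ℤ))) ^ 2 := by
  have hk := kendall_key (2*ν+1) x hx 1
  simp only [one_pow, mul_one, one_mul] at hk
  rw [← Finset.mul_sum, hk]
  have hfac : ∀ i ∈ Finset.range (2*ν+1),
      (1 + x ^ (((2*ν+1 : ℕ):ℤ) - 1 - 2*(i:ℤ))) = (1 + x ^ (2*(ν:ℤ) - 2*(i:ℤ))) := by
    intro i _
    congr 1
    push_cast
    ring
  rw [Finset.prod_congr rfl hfac, prod_odd ν x hx]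
  have hc : (1 / 2 ^ (2*ν+1) : ℝ) * 2 = 2 ^ (-(2 * ν + 1 : ℤ) + 1) := by
    rw [show (-(2 * (ν:ℤ) + 1) + 1) = -((2*ν : ℕ) : ℤ) from by push_cast; ring]
    rw [zpow_neg, zpow_natCast, pow_add, pow_one]
    field_simp
  rw [← hc]
  ring
end

section
/- For the uniform binary case with n = 2\nu even, the characteristic function of S is \phi(\theta) = \prod_{k=1}^{\nu} \cos^2((2k-1)\theta/2). -/
open Finset

lemma kendallS_binary {n : ℕ} (x : Fin n → Fin 2) :
    kendallS x = ∑ i : Fin n, ((n : ℤ) - 1 - 2 * (i : ℤ)) * (x i : ℤ) := by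
  have h1 : ∀ (P : Fin n × Fin n → Prop) [DecidablePred P],
      (((univ.filter P).card : ℤ)) = ∑ p : Fin n × Fin n, if P p then 1 else 0 := by
    intro P _; rw [Finset.sum_boole]
  rw [kendallS, h1, h1, ← Finset.sum_sub_distrib]
  have h2 : ∀ p : Fin n × Fin n,
      ((if p.2 < p.1 ∧ x p.1 < x p.2 then (1:ℤ) else 0) -
        (if p.2 < p.1 ∧ x p.2 < x p.1 then (1:ℤ) else 0))
      = if p.2 < p.1 then (x p.2 : ℤ) - (x p.1 : ℤ) else 0 := by
    intro p
    have a := (x p.1).isLt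
    have b := (x p.2).isLt
    have hl : x p.1 < x p.2 ↔ ((x p.1 : ℤ) < (x p.2 : ℤ)) := by
      rw [Fin.lt_def]; omega
    have hr : x p.2 < x p.1 ↔ ((x p.2 : ℤ) < (x p.1 : ℤ)) := by
      rw [Fin.lt_def]; omega
    by_cases h : p.2 < p.1
    · simp only [h, hl, hr, true_and, if_true]; split_ifs <;> omega
    · simp only [h, false_and, if_false]; ring
  rw [Finset.sum_congr rfl (fun p _ => h2 p), Fintype.sum_prod_type]
  have h3 : ∀ a b : Fin n, (if b < a then (x b : ℤ) - (x a : ℤ) else 0)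
      = (x b : ℤ) * (if b < a then 1 else 0) - (x a : ℤ) * (if b < a then 1 else 0) := by
    intro a b; split_ifs <;> ring
  simp_rw [h3, Finset.sum_sub_distrib]
  have hIoi : ∀ b : Fin n, univ.filter (fun a : Fin n => b < a) = Ioi b := by
    intro b; ext a; simp
  have hIio : ∀ a : Fin n, univ.filter (fun b : Fin n => b < a) = Iio a := by
    intro a; ext b; simp
  have e1 : (∑ a : Fin n, ∑ b : Fin n, (x b : ℤ) * (if b < a then 1 else 0))
      = ∑ b : Fin n, ((n : ℤ) - 1 - (b : ℤ)) * (x b : ℤ) := by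
    rw [Finset.sum_comm]
    refine Finset.sum_congr rfl fun b _ => ?_
    rw [← Finset.mul_sum, Finset.sum_boole, hIoi, Fin.card_Ioi]
    have hb := b.isLt
    have : ((n - 1 - (b : ℕ) : ℕ) : ℤ) = (n : ℤ) - 1 - (b : ℤ) := by omega
    rw [this]; ring
  have e2 : (∑ a : Fin n, ∑ b : Fin n, (x a : ℤ) * (if b < a then 1 else 0))
      = ∑ a : Fin n, ((a : ℕ) : ℤ) * (x a : ℤ) := by
    refine Finset.sum_congr rfl fun a _ => ?_
    rw [← Finset.mul_sum, Finset.sum_boole, hIio, Fin.card_Iio]; ring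
  rw [e1, e2, ← Finset.sum_sub_distrib]
  exact Finset.sum_congr rfl fun i _ => by ring

lemma half_exp (a : ℂ) :
    (1/2 : ℂ) + (1/2) * Complex.exp (a * Complex.I) =
      Complex.exp (a * Complex.I / 2) * Complex.cos (a / 2) := by
  rw [Complex.cos]
  rw [show a / 2 * Complex.I = a * Complex.I / 2 by ring,
    show -(a / 2) * Complex.I = -(a * Complex.I / 2) by ring]
  have h1 : Complex.exp (a*Complex.I/2) * Complex.exp (a*Complex.I/2)
      = Complex.exp (a*Complex.I) := by rw [← Complex.exp_add]; ring_nf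
  have h2 : Complex.exp (a*Complex.I/2) * Complex.exp (-(a*Complex.I/2)) = 1 := by
    rw [← Complex.exp_add]; simp
  linear_combination (-1/2 : ℂ) * h1 - (1/2 : ℂ) * h2

/-- Characteristic function of S for n = 2ν fair coin flips: φ(θ) = ∏ₖ cos²((2k-1)θ/2). -/
theorem kendall_char_even (ν : ℕ) (θ : ℝ) :
    ∑ j : Fin (2 * ν) → Fin 2,
        (1 / 2 ^ (2 * ν) : ℂ) * Complex.exp ((θ : ℂ) * Complex.I * (kendallS j : ℂ))
      = ∏ k ∈ Finset.Icc 1 ν,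
          Complex.cos ((2 * (k : ℂ) - 1) * (θ : ℂ) / 2) ^ 2 := by
  set n := 2 * ν with hn
  have c : Fin n → ℂ := fun i => ((n : ℂ) - 1 - 2 * ((i : ℕ) : ℂ))
  -- Step A: rewrite summand as a product
  have stepA : ∀ j : Fin n → Fin 2,
      (1 / 2 ^ n : ℂ) * Complex.exp ((θ : ℂ) * Complex.I * (kendallS j : ℂ))
      = ∏ i : Fin n, ((1/2 : ℂ) *
          Complex.exp ((((n : ℂ) - 1 - 2 * ((i : ℕ) : ℂ)) * θ) * Complex.I * ((j i : ℕ) : ℂ))) := by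
    intro j
    rw [kendallS_binary j]
    push_cast
    rw [Finset.mul_sum, Complex.exp_sum, Finset.prod_mul_distrib, Finset.prod_const,
      Finset.card_univ, Fintype.card_fin, div_pow, one_pow]
    congr 1
    refine Finset.prod_congr rfl fun i _ => ?_
    congr 1
    ring
  simp_rw [stepA]
  rw [← Fintype.piFinset_univ, ← Finset.prod_univ_sum (fun _ : Fin n => (univ : Finset (Fin 2)))
    (fun (i : Fin n) (v : Fin 2) => (1/2 : ℂ) *
      Complex.exp ((((n : ℂ) - 1 - 2 * ((i : ℕ) : ℂ)) * θ) * Complex.I * ((v : ℕ) : ℂ)))]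
  -- Step C: evaluate each binary sum
  have stepC : ∀ i : Fin n,
      (∑ v : Fin 2, ((1/2 : ℂ) *
        Complex.exp ((((n : ℂ) - 1 - 2 * ((i : ℕ) : ℂ)) * θ) * Complex.I * ((v : ℕ) : ℂ))))
      = Complex.exp ((((n : ℂ) - 1 - 2 * ((i : ℕ) : ℂ)) * θ) * Complex.I / 2) *
          Complex.cos ((((n : ℂ) - 1 - 2 * ((i : ℕ) : ℂ)) * θ) / 2) := by
    intro i
    rw [Fin.sum_univ_two]
    simp only [Fin.val_zero, Fin.val_one, Nat.cast_zero, Nat.cast_one, mul_zero, mul_one,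
      Complex.exp_zero]
    exact half_exp _
  simp_rw [stepC]
  rw [Finset.prod_mul_distrib, ← Complex.exp_sum]
  -- the phase product is 1
  have sumc : (∑ i : Fin n, (((n : ℂ) - 1 - 2 * ((i : ℕ) : ℂ)) * θ) * Complex.I / 2) = 0 := by
    have key : (∑ i : Fin n, ((n : ℂ) - 1 - 2 * ((i : ℕ) : ℂ))) = 0 := by
      rw [Fin.sum_univ_eq_sum_range (fun i => (n : ℂ) - 1 - 2 * (i : ℂ)) n]
      rw [Finset.sum_sub_distrib, Finset.sum_sub_distrib, Finset.sum_const, Finset.card_range,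
        ← Finset.mul_sum]
      have gauss : (∑ i ∈ Finset.range n, (i : ℂ)) * 2 = (n : ℂ) * ((n : ℂ) - 1) := by
        rcases Nat.eq_zero_or_pos n with h | h
        · simp [h]
        · have h1 := Finset.sum_range_id_mul_two n
          have h2 := congrArg (Nat.cast : ℕ → ℂ) h1
          push_cast [Nat.cast_sub h] at h2
          convert h2 using 2
      have : (∑ i ∈ Finset.range n, (i : ℂ)) = (n : ℂ) * ((n : ℂ) - 1) / 2 := by
        linear_combination gauss / 2
      rw [this]
      simp
      ring
    calc (∑ i : Fin n, (((n : ℂ) - 1 - 2 * ((i : ℕ) : ℂ)) * θ) * Complex.I / 2)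
        = (∑ i : Fin n, ((n : ℂ) - 1 - 2 * ((i : ℕ) : ℂ))) * (θ * Complex.I / 2) := by
          rw [Finset.sum_mul]
          exact Finset.sum_congr rfl fun i _ => by ring
      _ = 0 := by rw [key, zero_mul]
  rw [sumc, Complex.exp_zero, one_mul]
  -- Step E: reindex the cosine product
  have lhs_eq : (∏ i : Fin n, Complex.cos ((((n : ℂ) - 1 - 2 * ((i : ℕ) : ℂ)) * θ) / 2))
      = (∏ i ∈ Finset.range ν, Complex.cos ((2 * (i : ℂ) + 1) * θ / 2)) ^ 2 := by
    rw [Fin.prod_univ_eq_prod_range (fun i => Complex.cos ((((n : ℂ) - 1 - 2 * (i : ℂ)) * θ) / 2)) n]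
    rw [hn, two_mul, Finset.prod_range_add, sq]
    congr 1
    · rw [← Finset.prod_range_reflect (fun i => Complex.cos ((2 * (i : ℂ) + 1) * θ / 2)) ν]
      refine Finset.prod_congr rfl fun i hi => ?_
      have hi' : i < ν := Finset.mem_range.mp hi
      congr 1
      have : ((ν - 1 - i : ℕ) : ℂ) = (ν : ℂ) - 1 - (i : ℂ) := by
        have : (1 : ℕ) ≤ ν := by omega
        push_cast [Nat.cast_sub (by omega : i ≤ ν - 1), Nat.cast_sub this]
        ring
      rw [this]
      push_cast
      ring
    · refine Finset.prod_congr rfl fun i hi => ?_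
      rw [← Complex.cos_neg ((2 * (i : ℂ) + 1) * θ / 2)]
      congr 1
      push_cast
      ring
  rw [lhs_eq]
  -- rewrite RHS
  rw [← Finset.Ico_add_one_right_eq_Icc, Finset.prod_Ico_eq_prod_range, ← Finset.prod_pow]
  refine Finset.prod_congr rfl fun i _ => ?_
  congr 1
  push_cast
  ring
end

section
/- In the binary case \ell = 2 with i.i.d. fair coin flips, the fourth moment of S equals n(n^2-1)(5n^3 - 6n^2 - 5n + 14)/240. -/
open Finset

/-- Sum of a quartic polynomial over `range n`. -/
lemma sum_poly (c0 c1 c2 c3 c4 : ℚ) (n : ℕ) :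
    ∑ i ∈ Finset.range n,
      (c0 + c1*(i:ℚ) + c2*(i:ℚ)^2 + c3*(i:ℚ)^3 + c4*(i:ℚ)^4)
    = c0*n + c1*((n:ℚ)*(n-1)/2) + c2*((n:ℚ)*(n-1)*(2*n-1)/6) + c3*((n:ℚ)*(n-1)/2)^2
      + c4*((n:ℚ)*(n-1)*(2*n-1)*(3*(n:ℚ)^2-3*n-1)/30) := by
  induction n with
  | zero => simp
  | succ n ih => rw [Finset.sum_range_succ, ih]; push_cast; ring

lemma sum_c_pow (n : ℕ) :
    ((∑ i ∈ Finset.range n, ((n:ℚ) - 1 - 2*i)) = 0) ∧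
    ((∑ i ∈ Finset.range n, ((n:ℚ) - 1 - 2*i)^2) = (n:ℚ)*((n:ℚ)^2-1)/3) ∧
    ((∑ i ∈ Finset.range n, ((n:ℚ) - 1 - 2*i)^4)
      = (n:ℚ)*((n:ℚ)^2-1)*(3*(n:ℚ)^2-7)/15) := by
  refine ⟨?_, ?_, ?_⟩
  · rw [show (∑ i ∈ Finset.range n, ((n:ℚ) - 1 - 2*i))
        = ∑ i ∈ Finset.range n, (((n:ℚ)-1) + (-2)*(i:ℚ) + 0*(i:ℚ)^2 + 0*(i:ℚ)^3 + 0*(i:ℚ)^4)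
        from Finset.sum_congr rfl fun i _ => by ring, sum_poly]
    ring
  · rw [show (∑ i ∈ Finset.range n, ((n:ℚ) - 1 - 2*i)^2)
        = ∑ i ∈ Finset.range n, (((n:ℚ)-1)^2 + (-4*((n:ℚ)-1))*(i:ℚ) + 4*(i:ℚ)^2
            + 0*(i:ℚ)^3 + 0*(i:ℚ)^4)
        from Finset.sum_congr rfl fun i _ => by ring, sum_poly]
    ring
  · rw [show (∑ i ∈ Finset.range n, ((n:ℚ) - 1 - 2*i)^4)
        = ∑ i ∈ Finset.range n, (((n:ℚ)-1)^4 + (-8*((n:ℚ)-1)^3)*(i:ℚ)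
            + (24*((n:ℚ)-1)^2)*(i:ℚ)^2 + (-32*((n:ℚ)-1))*(i:ℚ)^3 + 16*(i:ℚ)^4)
        from Finset.sum_congr rfl fun i _ => by ring, sum_poly]
    ring

/-- Second and fourth moments of a ±1 weighted sum. -/
lemma moment24 (n : ℕ) (g : Fin n → ℚ) :
    ((∑ x : Fin n → Fin 2, (∑ i, g i * (2*((x i : Fin 2).val:ℚ) - 1))^2)
      = 2^n * ∑ i, (g i)^2) ∧
    ((∑ x : Fin n → Fin 2, (∑ i, g i * (2*((x i : Fin 2).val:ℚ) - 1))^4)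
      = 2^n * (3*(∑ i, (g i)^2)^2 - 2*∑ i, (g i)^4)) := by
  induction n with
  | zero => simp
  | succ n ih =>
    obtain ⟨ih2, ih4⟩ := ih (fun i => g i.succ)
    have key : ∀ (k : ℕ),
        (∑ x : Fin (n+1) → Fin 2, (∑ i, g i * (2*((x i).val:ℚ) - 1))^k)
        = ∑ p : Fin 2 × (Fin n → Fin 2),
            ((2*((p.1 : Fin 2).val:ℚ) - 1) * g 0
              + ∑ i : Fin n, g i.succ * (2*((p.2 i).val:ℚ) - 1))^k := by
      intro k
      rw [← Equiv.sum_comp (Fin.consEquiv (fun _ => Fin 2))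
        (fun x : Fin (n+1) → Fin 2 => (∑ i, g i * (2*((x i).val:ℚ) - 1))^k)]
      refine Finset.sum_congr rfl fun p _ => ?_
      congr 1
      rw [Fin.sum_univ_succ]
      simp [Fin.consEquiv, mul_comm]
    have hcard : (Finset.univ : Finset (Fin n → Fin 2)).card = 2^n := by
      simp [Fintype.card_fun]
    constructor
    · rw [key 2, Fintype.sum_prod_type, Fin.sum_univ_two]
      rw [← Finset.sum_add_distrib]
      have : ∀ y : Fin n → Fin 2,
          ((2*(((0:Fin 2)).val:ℚ) - 1) * g 0
              + ∑ i : Fin n, g i.succ * (2*((y i).val:ℚ) - 1))^2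
          + ((2*(((1:Fin 2)).val:ℚ) - 1) * g 0
              + ∑ i : Fin n, g i.succ * (2*((y i).val:ℚ) - 1))^2
          = 2*(∑ i : Fin n, g i.succ * (2*((y i).val:ℚ) - 1))^2 + 2*(g 0)^2 := by
        intro y; norm_num; ring
      rw [Finset.sum_congr rfl fun y _ => this y, Finset.sum_add_distrib,
        ← Finset.mul_sum, ih2, Finset.sum_const, hcard, Fin.sum_univ_succ]
      push_cast
      ring
    · rw [key 4, Fintype.sum_prod_type, Fin.sum_univ_two]
      rw [← Finset.sum_add_distrib]
      have : ∀ y : Fin n → Fin 2,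
          ((2*(((0:Fin 2)).val:ℚ) - 1) * g 0
              + ∑ i : Fin n, g i.succ * (2*((y i).val:ℚ) - 1))^4
          + ((2*(((1:Fin 2)).val:ℚ) - 1) * g 0
              + ∑ i : Fin n, g i.succ * (2*((y i).val:ℚ) - 1))^4
          = 2*(∑ i : Fin n, g i.succ * (2*((y i).val:ℚ) - 1))^4
            + (12*(g 0)^2)*(∑ i : Fin n, g i.succ * (2*((y i).val:ℚ) - 1))^2
            + 2*(g 0)^4 := by
        intro y; norm_num; ring
      rw [Finset.sum_congr rfl fun y _ => this y, Finset.sum_add_distrib,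
        Finset.sum_add_distrib, ← Finset.mul_sum, ← Finset.mul_sum, ih2, ih4,
        Finset.sum_const, hcard]
      rw [Fin.sum_univ_succ (f := fun i => (g i)^2), Fin.sum_univ_succ (f := fun i => (g i)^4)]
      push_cast
      ring

lemma kendall_linear {n : ℕ} (x : Fin n → Fin 2) :
    (kendallS x : ℚ) = ∑ i : Fin n, ((n:ℚ) - 1 - 2*(i:ℕ)) * ((x i).val : ℚ) := by
  have h1 : kendallS x
      = ∑ p : Fin n × Fin n,
          (if p.2 < p.1 then (((x p.2).val : ℤ) - ((x p.1).val : ℤ)) else 0) := by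
    unfold kendallS
    rw [Finset.card_filter, Finset.card_filter]
    push_cast
    rw [← Finset.sum_sub_distrib]
    refine Finset.sum_congr rfl fun p _ => ?_
    have ha := (x p.1).isLt
    have hb := (x p.2).isLt
    simp only [Fin.lt_def]
    split_ifs <;> push_cast <;> omega
  have h2 : (kendallS x : ℚ)
      = ∑ i : Fin n, ∑ j : Fin n,
          (if j < i then (((x j).val : ℚ) - ((x i).val : ℚ)) else 0) := by
    rw [h1]
    push_cast [Fintype.sum_prod_type]
    refine Finset.sum_congr rfl fun i _ => Finset.sum_congr rfl fun j _ => ?_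
    split_ifs <;> push_cast <;> ring
  rw [h2]
  have h3 : ∀ i : Fin n, ∑ j : Fin n,
      (if j < i then (((x j).val : ℚ) - ((x i).val : ℚ)) else 0)
      = (∑ j : Fin n, if j < i then ((x j).val : ℚ) else 0)
        - (i.val : ℚ) * ((x i).val : ℚ) := by
    intro i
    rw [show (∑ j : Fin n, (if j < i then (((x j).val : ℚ) - ((x i).val : ℚ)) else 0))
        = ∑ j : Fin n, ((if j < i then ((x j).val : ℚ) else 0)
            - (if j < i then ((x i).val : ℚ) else 0))
        from Finset.sum_congr rfl fun j _ => by split_ifs <;> ring,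
      Finset.sum_sub_distrib]
    congr 1
    rw [← Finset.sum_filter, Finset.sum_const, Finset.filter_gt_eq_Iio, Fin.card_Iio]
    simp [mul_comm]
  rw [Finset.sum_congr rfl fun i _ => h3 i, Finset.sum_sub_distrib, Finset.sum_comm]
  have h4 : ∀ j : Fin n, ∑ i : Fin n, (if j < i then ((x j).val : ℚ) else 0)
      = ((n : ℚ) - 1 - (j.val : ℚ)) * ((x j).val : ℚ) := by
    intro j
    rw [← Finset.sum_filter, Finset.sum_const, Finset.filter_lt_eq_Ioi, Fin.card_Ioi]
    have hj : (j : ℕ) < n := j.isLt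
    have : ((n - 1 - (j:ℕ) : ℕ) : ℚ) = (n : ℚ) - 1 - (j.val : ℚ) := by
      push_cast [Nat.cast_sub (by omega : (j:ℕ) ≤ n - 1), Nat.cast_sub (by omega : 1 ≤ n)]
      ring
    rw [nsmul_eq_mul, this]
  rw [Finset.sum_congr rfl fun j _ => h4 j, ← Finset.sum_sub_distrib]
  exact Finset.sum_congr rfl fun i _ => by ring

/-- Binary uniform case: μ₄(n) = E[S⁴] = n(n²-1)(5n³-6n²-5n+14)/240. -/
theorem kendall_fourth_moment_binary (n : ℕ) :
    (∑ x : Fin n → Fin 2, (kendallS x : ℚ) ^ 4) / 2 ^ n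
    = (n : ℚ) * ((n : ℚ) ^ 2 - 1)
        * (5 * (n : ℚ) ^ 3 - 6 * (n : ℚ) ^ 2 - 5 * (n : ℚ) + 14) / 240 := by
  obtain ⟨hs1, hs2, hs4⟩ := sum_c_pow n
  have hfin1 : (∑ i : Fin n, ((n:ℚ) - 1 - 2*(i:ℕ))) = 0 := by
    rw [Fin.sum_univ_eq_sum_range (fun i => ((n:ℚ) - 1 - 2*(i:ℕ)))]; exact hs1
  have hg : ∀ x : Fin n → Fin 2, (kendallS x : ℚ)
      = ∑ i : Fin n, (((n:ℚ) - 1 - 2*(i:ℕ))/2) * (2*((x i).val:ℚ) - 1) := by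
    intro x
    rw [kendall_linear x]
    have : (∑ i : Fin n, (((n:ℚ) - 1 - 2*(i:ℕ))/2) * (2*((x i).val:ℚ) - 1))
        = (∑ i : Fin n, ((n:ℚ) - 1 - 2*(i:ℕ)) * ((x i).val : ℚ))
          - (1/2) * ∑ i : Fin n, ((n:ℚ) - 1 - 2*(i:ℕ)) := by
      rw [Finset.mul_sum, ← Finset.sum_sub_distrib]
      exact Finset.sum_congr rfl fun i _ => by ring
    rw [this, hfin1]; ring
  obtain ⟨-, h4⟩ := moment24 n (fun i => ((n:ℚ) - 1 - 2*(i:ℕ))/2)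
  rw [Finset.sum_congr rfl fun x _ => by rw [hg x], h4]
  have hq2 : (∑ i : Fin n, ((((n:ℚ) - 1 - 2*(i:ℕ))/2))^2) = (n:ℚ)*((n:ℚ)^2-1)/12 := by
    rw [Fin.sum_univ_eq_sum_range (fun i => ((((n:ℚ) - 1 - 2*(i:ℕ))/2))^2)]
    rw [show (∑ i ∈ Finset.range n, ((((n:ℚ) - 1 - 2*(i:ℕ))/2))^2)
        = (1/4) * ∑ i ∈ Finset.range n, ((n:ℚ) - 1 - 2*(i:ℕ))^2 by
      rw [Finset.mul_sum]; exact Finset.sum_congr rfl fun i _ => by ring, hs2]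
    ring
  have hq4 : (∑ i : Fin n, ((((n:ℚ) - 1 - 2*(i:ℕ))/2))^4)
      = (n:ℚ)*((n:ℚ)^2-1)*(3*(n:ℚ)^2-7)/240 := by
    rw [Fin.sum_univ_eq_sum_range (fun i => ((((n:ℚ) - 1 - 2*(i:ℕ))/2))^4)]
    rw [show (∑ i ∈ Finset.range n, ((((n:ℚ) - 1 - 2*(i:ℕ))/2))^4)
        = (1/16) * ∑ i ∈ Finset.range n, ((n:ℚ) - 1 - 2*(i:ℕ))^4 by
      rw [Finset.mul_sum]; exact Finset.sum_congr rfl fun i _ => by ring, hs4]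
    ring
  rw [hq2, hq4]
  have h2n : (2:ℚ)^n ≠ 0 := by positivity
  field_simp
  ring
end

section
/- For biased binary sequences, the fourth moment of S equals n(n^2-1)(5n^3 - 6n^2 - 5n + 14) p^2 q^2 / 15 + n(n^2-1)(3n^2 - 7) pq (p-q)^2 / 15. -/
open Finset

namespace KendallAux

/- ### Power sums -/

lemma pow1 (n : ℕ) : ∑ k ∈ range n, (k:ℝ) = n*(n-1)/2 := by
  induction n with
  | zero => simp
  | succ m ih => rw [Finset.sum_range_succ, ih]; push_cast; ring

lemma pow2 (n : ℕ) : ∑ k ∈ range n, (k:ℝ)^2 = n*(n-1)*(2*n-1)/6 := by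
  induction n with
  | zero => simp
  | succ m ih => rw [Finset.sum_range_succ, ih]; push_cast; ring

lemma pow3 (n : ℕ) : ∑ k ∈ range n, (k:ℝ)^3 = (n*(n-1))^2/4 := by
  induction n with
  | zero => simp
  | succ m ih => rw [Finset.sum_range_succ, ih]; push_cast; ring

lemma pow4 (n : ℕ) : ∑ k ∈ range n, (k:ℝ)^4 = n*(n-1)*(2*n-1)*(3*n^2-3*n-1)/30 := by
  induction n with
  | zero => simp
  | succ m ih => rw [Finset.sum_range_succ, ih]; push_cast; ring

lemma sumc1 (n : ℕ) : ∑ k ∈ range n, ((n:ℝ)-1-2*k) = 0 := by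
  have : ∀ k ∈ range n, ((n:ℝ)-1-2*k) = ((n:ℝ)-1) + (-2)*(k:ℝ) := by intros; ring
  rw [Finset.sum_congr rfl this, Finset.sum_add_distrib, ← Finset.mul_sum, pow1,
    Finset.sum_const, Finset.card_range]
  push_cast; ring

lemma sumc2 (n : ℕ) : ∑ k ∈ range n, ((n:ℝ)-1-2*k)^2 = n*((n:ℝ)^2-1)/3 := by
  have : ∀ k ∈ range n, ((n:ℝ)-1-2*k)^2
      = ((n:ℝ)-1)^2 + (-(4*((n:ℝ)-1)))*(k:ℝ) + 4*(k:ℝ)^2 := by intros; ring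
  rw [Finset.sum_congr rfl this, Finset.sum_add_distrib, Finset.sum_add_distrib,
    ← Finset.mul_sum, ← Finset.mul_sum, pow1, pow2, Finset.sum_const, Finset.card_range]
  ring

lemma sumc4 (n : ℕ) : ∑ k ∈ range n, ((n:ℝ)-1-2*k)^4 = n*((n:ℝ)^2-1)*(3*(n:ℝ)^2-7)/15 := by
  have : ∀ k ∈ range n, ((n:ℝ)-1-2*k)^4
      = ((n:ℝ)-1)^4 + (-(8*((n:ℝ)-1)^3))*(k:ℝ) + (24*((n:ℝ)-1)^2)*(k:ℝ)^2
        + (-(32*((n:ℝ)-1)))*(k:ℝ)^3 + 16*(k:ℝ)^4 := by intros; ring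
  rw [Finset.sum_congr rfl this, Finset.sum_add_distrib, Finset.sum_add_distrib,
    Finset.sum_add_distrib, Finset.sum_add_distrib, ← Finset.mul_sum, ← Finset.mul_sum,
    ← Finset.mul_sum, ← Finset.mul_sum, pow1, pow2, pow3, pow4,
    Finset.sum_const, Finset.card_range]
  ring

/- ### The Kendall score of a binary sequence as a linear statistic -/

lemma two_cases : ∀ u v : Fin 2,
    ((if u < v then (1:ℤ) else 0) - (if v < u then (1:ℤ) else 0)) = (v:ℤ) - (u:ℤ) := by decide

lemma kendallS_eq {n : ℕ} (x : Fin n → Fin 2) :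
    kendallS x = ∑ k : Fin n, ((n:ℤ) - 1 - 2*(k:ℕ)) * ((x k : ℕ) : ℤ) := by
  have hcard : ∀ (P : Fin n × Fin n → Prop) (_ : DecidablePred P),
      ((univ.filter P).card : ℤ) = ∑ p : Fin n × Fin n, if P p then (1:ℤ) else 0 := by
    intro P hP
    rw [Finset.card_filter]
    push_cast
    exact Finset.sum_congr rfl (fun p _ => by split_ifs <;> simp)
  unfold kendallS
  rw [hcard, hcard, ← Finset.sum_sub_distrib]
  have step1 : ∀ p : Fin n × Fin n,
      ((if p.2 < p.1 ∧ x p.1 < x p.2 then (1:ℤ) else 0)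
        - (if p.2 < p.1 ∧ x p.2 < x p.1 then (1:ℤ) else 0))
      = if p.2 < p.1 then ((x p.2 : ℕ) : ℤ) - ((x p.1 : ℕ) : ℤ) else 0 := by
    intro p
    by_cases h : p.2 < p.1
    · simp only [h, true_and, if_pos]
      have := two_cases (x p.1) (x p.2)
      simpa using this
    · simp [h]
  rw [Finset.sum_congr rfl (fun p _ => step1 p), Fintype.sum_prod_type]
  have split : ∀ i j : Fin n, (if j < i then ((x j : ℕ):ℤ) - ((x i : ℕ):ℤ) else 0)
      = (if j < i then ((x j : ℕ):ℤ) else 0) - (if j < i then ((x i : ℕ):ℤ) else 0) := by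
    intro i j; split_ifs <;> simp
  simp only [split, Finset.sum_sub_distrib]
  have h1 : ∀ i : Fin n, ∑ j : Fin n, (if j < i then ((x i : ℕ):ℤ) else 0)
      = (i:ℕ) * ((x i : ℕ):ℤ) := by
    intro i
    rw [Finset.sum_ite, Finset.sum_const, Finset.sum_const_zero, add_zero,
      Finset.filter_gt_eq_Iio, Fin.card_Iio, nsmul_eq_mul]
  have h2 : ∑ i : Fin n, ∑ j : Fin n, (if j < i then ((x j : ℕ):ℤ) else 0)
      = ∑ j : Fin n, ((n:ℤ) - 1 - (j:ℕ)) * ((x j : ℕ):ℤ) := by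
    rw [Finset.sum_comm]
    refine Finset.sum_congr rfl (fun j _ => ?_)
    rw [Finset.sum_ite, Finset.sum_const, Finset.sum_const_zero, add_zero,
      Finset.filter_lt_eq_Ioi, Fin.card_Ioi, nsmul_eq_mul]
    have hj : (j:ℕ) < n := j.isLt
    have : ((n - 1 - (j:ℕ) : ℕ) : ℤ) = (n:ℤ) - 1 - (j:ℕ) := by omega
    rw [this]
  rw [h2, Finset.sum_congr rfl (fun i _ => h1 i), ← Finset.sum_sub_distrib]
  refine Finset.sum_congr rfl (fun k _ => ?_)
  ring

/- ### Expectation machinery -/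

/-- weight of one coordinate -/
def w (p q : ℝ) (v : Fin 2) : ℝ := if v = 0 then p else q

def W {n : ℕ} (p q : ℝ) (x : Fin n → Fin 2) : ℝ := ∏ k, w p q (x k)

def A {n : ℕ} (q : ℝ) (c : Fin n → ℝ) (s : Finset (Fin n)) (x : Fin n → Fin 2) : ℝ :=
  ∑ k ∈ s, c k * (((x k : ℕ) : ℝ) - q)

def μ (p q : ℝ) (i : ℕ) : ℝ := p * (0 - q)^i + q * (1 - q)^i

lemma E_one {n : ℕ} (p q : ℝ) (hpq : p + q = 1) : ∑ x : Fin n → Fin 2, W p q x = 1 := by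
  unfold W
  rw [← Fintype.piFinset_univ, ← Finset.prod_univ_sum]
  have hw : w p q 0 + w p q 1 = 1 := by simpa [w] using hpq
  simp [Fin.sum_univ_two, hw]

lemma E_split {n : ℕ} (p q : ℝ) (a : Fin n) (s : Finset (Fin n)) (ha : a ∉ s)
    (c : Fin n → ℝ) (j i : ℕ) (hpq : p + q = 1) :
    ∑ x : Fin n → Fin 2, W p q x * (A q c s x ^ j * (((x a : ℕ) : ℝ) - q) ^ i)
    = (∑ x : Fin n → Fin 2, W p q x * A q c s x ^ j) * μ p q i := by
  classical
  set e := Equiv.piSplitAt a (fun _ : Fin n => Fin 2) with he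
  have hWsplit : ∀ v : Fin 2, ∀ y : {k : Fin n // k ≠ a} → Fin 2,
      W p q (e.symm (v, y)) = w p q v * ∏ k : {k : Fin n // k ≠ a}, w p q (y k) := by
    intro v y
    unfold W
    rw [← Finset.mul_prod_erase univ _ (mem_univ a)]
    congr 1
    · congr 1
      simp [he, Equiv.piSplitAt]
    · rw [Finset.prod_subtype (p := fun k => k ≠ a) (univ.erase a)
        (fun k => by simp [Finset.mem_erase])]
      refine Finset.prod_congr rfl (fun k _ => ?_)
      congr 1
      simp [he, Equiv.piSplitAt, dif_neg k.prop]
  have hAsplit : ∀ v : Fin 2, ∀ y : {k : Fin n // k ≠ a} → Fin 2,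
      A q c s (e.symm (v, y)) = A q c s (e.symm (0, y)) := by
    intro v y
    unfold A
    refine Finset.sum_congr rfl (fun k hk => ?_)
    have hk' : k ≠ a := ne_of_mem_of_not_mem hk ha
    congr 2
    simp [he, Equiv.piSplitAt, dif_neg hk']
  have key : ∀ i : ℕ,
      ∑ x : Fin n → Fin 2, W p q x * (A q c s x ^ j * (((x a : ℕ) : ℝ) - q) ^ i)
      = (∑ v : Fin 2, w p q v * (((v : ℕ) : ℝ) - q) ^ i)
        * ∑ y : {k : Fin n // k ≠ a} → Fin 2,
            (∏ k : {k : Fin n // k ≠ a}, w p q (y k)) * A q c s (e.symm (0, y)) ^ j := by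
    intro i
    rw [← Equiv.sum_comp e.symm
      (fun x => W p q x * (A q c s x ^ j * (((x a : ℕ) : ℝ) - q) ^ i)),
      Fintype.sum_prod_type, Finset.sum_mul_sum]
    refine Finset.sum_congr rfl (fun v _ => Finset.sum_congr rfl (fun y _ => ?_))
    have hxa : (e.symm (v, y)) a = v := by simp [he, Equiv.piSplitAt]
    rw [hWsplit v y, hAsplit v y, hxa]
    ring
  have h0 : (∑ v : Fin 2, w p q v) = 1 := by
    rw [Fin.sum_univ_two]; simpa [w] using hpq
  have hμ : (∑ v : Fin 2, w p q v * (((v : ℕ) : ℝ) - q) ^ i) = μ p q i := by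
    rw [Fin.sum_univ_two]; simp [w, μ]
  have hj := key 0
  simp only [pow_zero, mul_one] at hj
  rw [h0, one_mul] at hj
  rw [key i, hμ, hj, mul_comm]

lemma mu_vals {p q : ℝ} (hpq : p + q = 1) :
    μ p q 1 = 0 ∧ μ p q 2 = p*q ∧ μ p q 3 = p*q*(p-q) ∧ μ p q 4 = p*q*(1-3*p*q) := by
  have hq : q = 1 - p := by linarith
  subst hq
  refine ⟨by unfold μ; ring, by unfold μ; ring, by unfold μ; ring, by unfold μ; ring⟩

lemma E_moments {n : ℕ} {p q : ℝ} (hpq : p + q = 1) (c : Fin n → ℝ) (s : Finset (Fin n)) :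
    (∑ x : Fin n → Fin 2, W p q x * A q c s x) = 0 ∧
    (∑ x : Fin n → Fin 2, W p q x * A q c s x ^ 2) = p*q * ∑ k ∈ s, c k^2 ∧
    (∑ x : Fin n → Fin 2, W p q x * A q c s x ^ 4)
      = p*q*(1-3*p*q) * (∑ k ∈ s, c k^4)
        + 3*(p*q)^2 * ((∑ k ∈ s, c k^2)^2 - ∑ k ∈ s, c k^4) := by
  classical
  obtain ⟨hμ1, hμ2, hμ3, hμ4⟩ := mu_vals hpq
  induction s using Finset.induction_on with
  | empty => simp [A]
  | @insert a s ha ih =>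
    obtain ⟨ih1, ih2, ih4⟩ := ih
    have hA : ∀ x : Fin n → Fin 2, A q c (insert a s) x
        = A q c s x + c a * (((x a : ℕ) : ℝ) - q) := by
      intro x; unfold A; rw [Finset.sum_insert ha]; ring
    have K := fun j i => E_split p q a s ha c j i hpq
    have K0 : ∀ i, ∑ x : Fin n → Fin 2, W p q x * (((x a : ℕ) : ℝ) - q) ^ i
        = μ p q i := by
      intro i
      have := K 0 i
      simpa [E_one p q hpq] using this
    have K1 := K 1
    simp only [pow_one] at K1
    have K01 := K0 1
    have K11 := K1 1
    have K31 := K 3 1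
    simp only [pow_one] at K01 K11 K31
    have e1 : (∑ x : Fin n → Fin 2, W p q x * A q c (insert a s) x) = 0 := by
      have expand : ∀ x ∈ (univ : Finset (Fin n → Fin 2)),
          W p q x * A q c (insert a s) x
          = W p q x * A q c s x + c a * (W p q x * (((x a : ℕ) : ℝ) - q)) := by
        intro x _; rw [hA x]; ring
      rw [Finset.sum_congr rfl expand, Finset.sum_add_distrib, ← Finset.mul_sum,
        ih1, K01, hμ1]
      ring
    have e2 : (∑ x : Fin n → Fin 2, W p q x * A q c (insert a s) x ^ 2)
        = p*q * ∑ k ∈ insert a s, c k^2 := by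
      have expand : ∀ x ∈ (univ : Finset (Fin n → Fin 2)),
          W p q x * A q c (insert a s) x ^ 2
          = W p q x * A q c s x ^ 2
            + (2 * c a) * (W p q x * (A q c s x * (((x a : ℕ) : ℝ) - q)))
            + c a ^ 2 * (W p q x * (((x a : ℕ) : ℝ) - q) ^ 2) := by
        intro x _; rw [hA x]; ring
      rw [Finset.sum_congr rfl expand, Finset.sum_add_distrib, Finset.sum_add_distrib,
        ← Finset.mul_sum, ← Finset.mul_sum, ih2, K11, K0 2, hμ1, hμ2,
        Finset.sum_insert ha]
      ring
    have e4 : (∑ x : Fin n → Fin 2, W p q x * A q c (insert a s) x ^ 4)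
        = p*q*(1-3*p*q) * (∑ k ∈ insert a s, c k^4)
          + 3*(p*q)^2 * ((∑ k ∈ insert a s, c k^2)^2 - ∑ k ∈ insert a s, c k^4) := by
      have expand : ∀ x ∈ (univ : Finset (Fin n → Fin 2)),
          W p q x * A q c (insert a s) x ^ 4
          = W p q x * A q c s x ^ 4
            + (4 * c a) * (W p q x * (A q c s x ^ 3 * (((x a : ℕ) : ℝ) - q)))
            + (6 * c a ^ 2) * (W p q x * (A q c s x ^ 2 * (((x a : ℕ) : ℝ) - q) ^ 2))
            + (4 * c a ^ 3) * (W p q x * (A q c s x * (((x a : ℕ) : ℝ) - q) ^ 3))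
            + c a ^ 4 * (W p q x * (((x a : ℕ) : ℝ) - q) ^ 4) := by
        intro x _; rw [hA x]; ring
      rw [Finset.sum_congr rfl expand, Finset.sum_add_distrib, Finset.sum_add_distrib,
        Finset.sum_add_distrib, Finset.sum_add_distrib,
        ← Finset.mul_sum, ← Finset.mul_sum, ← Finset.mul_sum, ← Finset.mul_sum,
        ih4, K31, K 2 2, K1 3, K0 4, hμ1, hμ2, hμ3, hμ4, ih2, ih1,
        Finset.sum_insert ha, Finset.sum_insert ha]
      ring
    exact ⟨e1, e2, e4⟩

end KendallAux

open KendallAux in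
/-- Biased binary case: the fourth moment of S. -/
theorem kendall_fourth_moment_biased (n : ℕ) (p q : ℝ) (hp : 0 ≤ p) (hq : 0 ≤ q)
    (hpq : p + q = 1) :
    ∑ x : Fin n → Fin 2, (∏ k, if x k = 0 then p else q) * (kendallS x : ℝ) ^ 4
    = (n : ℝ) * ((n : ℝ) ^ 2 - 1)
        * (5 * (n : ℝ) ^ 3 - 6 * (n : ℝ) ^ 2 - 5 * (n : ℝ) + 14) * p ^ 2 * q ^ 2 / 15
      + (n : ℝ) * ((n : ℝ) ^ 2 - 1) * (3 * (n : ℝ) ^ 2 - 7) * p * q * (p - q) ^ 2 / 15 := by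
  classical
  set c : Fin n → ℝ := fun k => (n:ℝ) - 1 - 2*((k:ℕ):ℝ) with hc
  have hsum0 : ∑ k : Fin n, c k = 0 := by
    rw [hc, Fin.sum_univ_eq_sum_range (fun k : ℕ => (n:ℝ) - 1 - 2*(k:ℝ)) n]
    exact sumc1 n
  have hA : ∀ x : Fin n → Fin 2, (kendallS x : ℝ) = A q c univ x := by
    intro x
    have expand : ∀ k ∈ (univ : Finset (Fin n)),
        c k * (((x k : ℕ) : ℝ) - q) = c k * ((x k : ℕ) : ℝ) - q * c k := by
      intro k _; ring
    rw [A, Finset.sum_congr rfl expand, Finset.sum_sub_distrib, ← Finset.mul_sum,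
      hsum0, mul_zero, sub_zero, kendallS_eq x]
    push_cast
    exact Finset.sum_congr rfl (fun k _ => by rw [hc])
  have hc2 : ∑ k : Fin n, c k ^ 2 = n*((n:ℝ)^2-1)/3 := by
    rw [hc]
    rw [Fin.sum_univ_eq_sum_range (fun k : ℕ => ((n:ℝ) - 1 - 2*(k:ℝ))^2) n]
    exact sumc2 n
  have hc4 : ∑ k : Fin n, c k ^ 4 = n*((n:ℝ)^2-1)*(3*(n:ℝ)^2-7)/15 := by
    rw [hc]
    rw [Fin.sum_univ_eq_sum_range (fun k : ℕ => ((n:ℝ) - 1 - 2*(k:ℝ))^4) n]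
    exact sumc4 n
  have hmain := (E_moments hpq c univ).2.2
  rw [hc2, hc4] at hmain
  have hLHS : ∑ x : Fin n → Fin 2, (∏ k, if x k = 0 then p else q) * (kendallS x : ℝ) ^ 4
      = ∑ x : Fin n → Fin 2, W p q x * A q c univ x ^ 4 := by
    refine Finset.sum_congr rfl (fun x _ => ?_)
    rw [hA x]
    rfl
  rw [hLHS, hmain]
  have hq' : q = 1 - p := by linarith
  subst hq'
  ring
end

section
/- The counts P_n(t; j_0,...,j_{\ell-1}) of sequences of length n with j_r occurrences of digit r and Kendall score t satisfy the recursion P_{n+1}(t; i_0,...,i_{\ell-1}) = \sum_{k=0}^{\ell-1} P_n(t + i_0 + ... + i_{k-1} - i_{k+1} - ... - i_{\ell-1}; i_0,...,i_k - 1,...,i_{\ell-1}), where i_0 + ... + i_{\ell-1} = n+1. -/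
open Finset

/-- P n t j: the number of sequences of length n with exactly j r occurrences of each digit r
and Kendall score t. -/
def kendallCount (ℓ n : ℕ) (t : ℤ) (j : Fin ℓ → ℕ) : ℕ :=
  (Finset.univ.filter (fun x : Fin n → Fin ℓ =>
    kendallS x = t ∧ ∀ r, (Finset.univ.filter (fun k => x k = r)).card = j r)).card


lemma snoc_count {ℓ n : ℕ} (y : Fin n → Fin ℓ) (k r : Fin ℓ) :
    (univ.filter (fun j : Fin (n+1) => (Fin.snoc y k : Fin (n+1) → Fin ℓ) j = r)).card
    = (univ.filter (fun j => y j = r)).card + if k = r then 1 else 0 := by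
  simp only [Finset.card_filter, Fin.sum_univ_castSucc, Fin.snoc_castSucc, Fin.snoc_last]

lemma snoc_rel {ℓ n : ℕ} (y : Fin n → Fin ℓ) (k : Fin ℓ) (R : Fin ℓ → Fin ℓ → Prop) [DecidableRel R] :
    (univ.filter (fun p : Fin (n+1) × Fin (n+1) => p.2 < p.1 ∧ R ((Fin.snoc y k : Fin (n+1) → Fin ℓ) p.1) ((Fin.snoc y k : Fin (n+1) → Fin ℓ) p.2))).card
    = (univ.filter (fun p : Fin n × Fin n => p.2 < p.1 ∧ R (y p.1) (y p.2))).card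
      + (univ.filter (fun b => R k (y b))).card := by
  simp only [Finset.card_filter, Fintype.sum_prod_type]
  rw [Fin.sum_univ_castSucc]
  simp only [Fin.sum_univ_castSucc, Fin.snoc_castSucc, Fin.snoc_last,
    Fin.castSucc_lt_castSucc_iff, Fin.castSucc_lt_last, lt_irrefl, true_and, false_and,
    if_false, if_true, and_true, Fin.not_lt, Fin.le_last, add_zero]
  have : ∀ a : Fin n, ¬ (Fin.last n < Fin.castSucc a) := fun a => not_lt.2 (Fin.le_last _)
  simp [this]

lemma card_filter_rel {ℓ n : ℕ} (y : Fin n → Fin ℓ) (P : Fin ℓ → Prop) [DecidablePred P] :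
    (univ.filter (fun b => P (y b))).card
    = ∑ r ∈ univ.filter P, (univ.filter (fun b => y b = r)).card := by
  rw [Finset.card_eq_sum_card_fiberwise (f := y) (t := univ.filter P)
    (by intro b hb; simp at hb ⊢; exact hb)]
  apply Finset.sum_congr rfl
  intro r hr
  simp only [Finset.mem_filter, Finset.mem_univ, true_and] at hr
  congr 1
  ext b
  simp only [Finset.mem_filter, Finset.mem_univ, true_and]
  constructor
  · rintro ⟨_, hb⟩; exact hb
  · intro hb; exact ⟨hb ▸ hr, hb⟩

-- kendallS of snoc
lemma kendallS_snoc {ℓ n : ℕ} (y : Fin n → Fin ℓ) (k : Fin ℓ) :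
    kendallS (Fin.snoc y k : Fin (n+1) → Fin ℓ)
    = kendallS y + ((univ.filter (fun b => k < y b)).card : ℤ)
       - ((univ.filter (fun b => y b < k)).card : ℤ) := by
  unfold kendallS
  rw [snoc_rel y k (· < ·), snoc_rel y k (fun a b => b < a)]
  push_cast
  ring

lemma sum_fibers {ℓ n : ℕ} (y : Fin n → Fin ℓ) :
    ∑ r : Fin ℓ, (univ.filter (fun b => y b = r)).card = n := by
  rw [← Finset.card_eq_sum_card_fiberwise (f := y) (t := univ) (fun _ _ => mem_univ _)]
  simp

lemma kendallS_snoc' {ℓ n : ℕ} (y : Fin n → Fin ℓ) (k : Fin ℓ) (c : Fin ℓ → ℕ)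
    (hc : ∀ r, (univ.filter (fun b => y b = r)).card = c r) :
    kendallS (Fin.snoc y k : Fin (n+1) → Fin ℓ)
    = kendallS y + ∑ r ∈ univ.filter (fun r => k < r), (c r : ℤ)
      - ∑ r ∈ univ.filter (fun r => r < k), (c r : ℤ) := by
  rw [kendallS_snoc, card_filter_rel y (fun r => k < r), card_filter_rel y (fun r => r < k)]
  push_cast
  simp [hc]

/-- The fundamental recursion for the counts P: terms with i k - 1 < 0 are zero
(here via truncated subtraction, the digit counts then fail to sum to n). -/
theorem kendallCount_recursion (ℓ n : ℕ) (i : Fin ℓ → ℕ) (t : ℤ)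
    (h : ∑ r, i r = n + 1) :
    kendallCount ℓ (n + 1) t i
      = ∑ k : Fin ℓ,
          kendallCount ℓ n
            (t + ∑ r ∈ Finset.univ.filter (fun r => r < k), (i r : ℤ)
               - ∑ r ∈ Finset.univ.filter (fun r => k < r), (i r : ℤ))
            (Function.update i k (i k - 1)) := by
  classical
  unfold kendallCount
  rw [Finset.card_eq_sum_card_fiberwise
    (f := fun x : Fin (n+1) → Fin ℓ => x (Fin.last n)) (t := (univ : Finset (Fin ℓ)))
    (fun _ _ => mem_univ _)]
  apply Finset.sum_congr rfl
  intro k _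
  rw [Finset.filter_filter]
  set u : Fin ℓ → ℕ := Function.update i k (i k - 1) with hu
  -- sums of u over the < and > filters agree with i
  have hugt : ∑ r ∈ univ.filter (fun r => k < r), (u r : ℤ)
      = ∑ r ∈ univ.filter (fun r => k < r), (i r : ℤ) := by
    refine Finset.sum_congr rfl fun r hr => ?_
    simp only [Finset.mem_filter] at hr
    rw [hu, Function.update_of_ne (ne_of_gt hr.2)]
  have hult : ∑ r ∈ univ.filter (fun r => r < k), (u r : ℤ)
      = ∑ r ∈ univ.filter (fun r => r < k), (i r : ℤ) := by
    refine Finset.sum_congr rfl fun r hr => ?_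
    simp only [Finset.mem_filter] at hr
    rw [hu, Function.update_of_ne (ne_of_lt hr.2)]
  by_cases hk : i k = 0
  · -- both sides are zero
    have h1 : ∀ x : Fin (n+1) → Fin ℓ,
        ¬ ((kendallS x = t ∧ ∀ r, (univ.filter (fun j => x j = r)).card = i r)
            ∧ x (Fin.last n) = k) := by
      rintro x ⟨⟨-, hc⟩, hl⟩
      have hm : Fin.last n ∈ univ.filter (fun j => x j = k) := by simp [hl]
      have := Finset.card_pos.2 ⟨_, hm⟩
      have := hc k
      omega
    have h2 : ∀ y : Fin n → Fin ℓ,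
        ¬ (kendallS y = t + ∑ r ∈ univ.filter (fun r => r < k), (i r : ℤ)
             - ∑ r ∈ univ.filter (fun r => k < r), (i r : ℤ)
           ∧ ∀ r, (univ.filter (fun j => y j = r)).card = u r) := by
      rintro y ⟨-, hc⟩
      have hs := sum_fibers y
      rw [Finset.sum_congr rfl (fun r _ => hc r)] at hs
      have : ∑ r : Fin ℓ, u r = ∑ r : Fin ℓ, i r := by
        refine Finset.sum_congr rfl fun r _ => ?_
        rcases eq_or_ne r k with rfl | hne
        · simp [hu, hk]
        · rw [hu, Function.update_of_ne hne]
      rw [this, h] at hs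
      omega
    rw [Finset.filter_false_of_mem (fun x _ => h1 x),
        Finset.filter_false_of_mem (fun y _ => h2 y)]
    rfl
  · -- bijection via init / snoc
    apply Finset.card_nbij' (fun x => Fin.init x) (fun y => (Fin.snoc y k : Fin (n+1) → Fin ℓ))
    · intro x hx
      simp only [Finset.mem_coe, Finset.mem_filter, Finset.mem_univ, true_and] at hx ⊢
      obtain ⟨⟨hS, hc⟩, hl⟩ := hx
      have hxy : (Fin.snoc (Fin.init x) k : Fin (n+1) → Fin ℓ) = x := by
        rw [← hl]; exact Fin.snoc_init_self x
      have hcy : ∀ r, (univ.filter (fun j => Fin.init x j = r)).card = u r := by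
        intro r
        have := snoc_count (Fin.init x) k r
        rw [hxy, hc r] at this
        rcases eq_or_ne r k with rfl | hne
        · simp only [eq_self_iff_true, if_true] at this
          rw [hu, Function.update_self]
          omega
        · simp only [if_neg (Ne.symm hne), add_zero] at this
          rw [hu, Function.update_of_ne hne, ← this]
      refine ⟨?_, hcy⟩
      have hks := kendallS_snoc' (Fin.init x) k u hcy
      rw [hxy, hS, hugt, hult] at hks
      linarith
    · intro y hy
      simp only [Finset.mem_coe, Finset.mem_filter, Finset.mem_univ, true_and] at hy ⊢
      obtain ⟨hS, hc⟩ := hy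
      have hcx : ∀ r, (univ.filter (fun j => (Fin.snoc y k : Fin (n+1) → Fin ℓ) j = r)).card = i r := by
        intro r
        rw [snoc_count, hc r]
        rcases eq_or_ne r k with rfl | hne
        · simp only [eq_self_iff_true, if_true]
          rw [hu, Function.update_self]
          omega
        · rw [if_neg (Ne.symm hne), add_zero, hu, Function.update_of_ne hne]
      refine ⟨⟨?_, hcx⟩, by simp⟩
      have hks := kendallS_snoc' y k u hc
      rw [hS, hugt, hult] at hks
      linarith
    · intro x hx
      simp only [Finset.mem_coe, Finset.mem_filter, Finset.mem_univ, true_and] at hx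
      rw [← hx.2]
      exact Fin.snoc_init_self x
    · intro y hy
      exact Fin.init_snoc (α := fun _ => Fin ℓ) k y
end
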